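/- In a proper unital *-ring A with A_Σ salient, define the ball 𝔅 = {a : a^*a ⪯ 1} where a ⪯ b means b−a ∈ 𝔯. Then 𝔅 is closed under multiplication and under the involution: 𝔅𝔅 ⊆ 𝔅 and 𝔅^* = 𝔅. -/

import Mathlib

open Pointwise

/-- Finite sums of elements of the form `star a * a`. -/
def sSums (A : Type*) [Ring A] [StarRing A] : Set A :=
  (AddSubmonoid.closure {x : A | ∃ a : A, x = star a * a} : Set A)

/-- The *-positive elements. -/
def pos (A : Type*) [Ring A] [StarRing A] : Set A :=
  {a : A | ∃ n : ℕ, 0 < n ∧ n • a ∈ sSums A}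

/-- The *-accretive elements. -/
def accr (A : Type*) [Ring A] [StarRing A] : Set A :=
  {a : A | a + star a ∈ pos A}

/-- The order `a ⪯ b ⟺ b - a ∈ 𝔯`. -/
def ple {A : Type*} [Ring A] [StarRing A] (a b : A) : Prop := b - a ∈ accr A

/-- The cone `𝔠`. -/
def cone (A : Type*) [Ring A] [StarRing A] : Set A :=
  {a : A | ∃ n : ℕ, 0 < n ∧ ple (star a * a) (n • a)}

/-- The ball `𝔅`. -/
def ball (A : Type*) [Ring A] [StarRing A] : Set A :=
  {a : A | ple (star a * a) 1}

lemma gen_mem_sSums {A : Type*} [Ring A] [StarRing A] (a : A) : star a * a ∈ sSums A :=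
  AddSubmonoid.subset_closure ⟨a, rfl⟩

lemma sSums_conj {A : Type*} [Ring A] [StarRing A] {x : A} (hx : x ∈ sSums A) (b : A) :
    star b * x * b ∈ sSums A := by
  induction hx using AddSubmonoid.closure_induction with
  | mem x hx =>
      obtain ⟨c, rfl⟩ := hx
      have : star b * (star c * c) * b = star (c * b) * (c * b) := by
        simp [star_mul, mul_assoc]
      rw [this]; exact gen_mem_sSums _
  | zero => simpa using (show (0 : A) ∈ sSums A from (AddSubmonoid.closure _).zero_mem)
  | add x y _ _ hx hy =>
      have : star b * (x + y) * b = star b * x * b + star b * y * b := by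
        noncomm_ring
      rw [this]; exact (AddSubmonoid.closure _).add_mem hx hy

lemma pos_add {A : Type*} [Ring A] [StarRing A] {x y : A} (hx : x ∈ pos A) (hy : y ∈ pos A) :
    x + y ∈ pos A := by
  obtain ⟨n, hn, hxn⟩ := hx
  obtain ⟨m, hm, hym⟩ := hy
  refine ⟨n * m, Nat.mul_pos hn hm, ?_⟩
  have : (n * m) • (x + y) = m • (n • x) + n • (m • y) := by
    rw [smul_add, smul_smul, smul_smul, mul_comm m n]
  rw [this]
  exact (AddSubmonoid.closure _).add_mem
    ((AddSubmonoid.closure _).nsmul_mem hxn m) ((AddSubmonoid.closure _).nsmul_mem hym n)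

lemma pos_conj {A : Type*} [Ring A] [StarRing A] {x : A} (hx : x ∈ pos A) (b : A) :
    star b * x * b ∈ pos A := by
  obtain ⟨n, hn, hxn⟩ := hx
  refine ⟨n, hn, ?_⟩
  have : n • (star b * x * b) = star b * (n • x) * b := by
    rw [mul_smul_comm, smul_mul_assoc]
  rw [this]
  exact sSums_conj hxn b

lemma mem_ball_iff {A : Type*} [Ring A] [StarRing A] {a : A} :
    a ∈ ball A ↔ 1 - star a * a ∈ pos A := by
  have hsa : star (1 - star a * a) = 1 - star a * a := by
    simp [star_sub, star_mul, mul_assoc]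
  constructor
  · rintro ⟨n, hn, hs⟩
    refine ⟨2 * n, by omega, ?_⟩
    have : (2 * n) • (1 - star a * a) = n • ((1 - star a * a) + star (1 - star a * a)) := by
      rw [hsa, smul_add, two_mul, add_smul]
    rw [this]; exact hs
  · intro h
    show (1 - star a * a) + star (1 - star a * a) ∈ pos A
    rw [hsa]
    exact pos_add h h

theorem stmt5 {A : Type*} [Ring A] [StarRing A]
    (proper : ∀ a : A, star a * a = 0 → a = 0)
    (salient : sSums A ∩ (-sSums A) = {0}) :
    (∀ a ∈ ball A, ∀ b ∈ ball A, a * b ∈ ball A) ∧ star '' ball A = ball A := by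
  have star_mem : ∀ a ∈ ball A, star a ∈ ball A := by
    intro a ha
    rw [mem_ball_iff] at ha ⊢
    obtain ⟨n, hn, hs⟩ := ha
    have key : 1 - star (star a) * star a
        = (1 - a * star a) * (1 - a * star a) + a * (1 - star a * a) * star a := by
      simp only [star_star]; noncomm_ring
    refine ⟨n * n, Nat.mul_pos hn hn, ?_⟩
    rw [key, smul_add]
    refine (AddSubmonoid.closure _).add_mem ?_ ?_
    · have h1 : (n * n) • ((1 - a * star a) * (1 - a * star a))
          = star (n • (1 - a * star a)) * (n • (1 - a * star a)) := by
        rw [star_nsmul, star_sub, star_mul, star_star, star_one, smul_mul_smul_comm]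
      rw [h1]; exact gen_mem_sSums _
    · have h2 : (n * n) • (a * (1 - star a * a) * star a)
          = n • (star (star a) * (n • (1 - star a * a)) * star a) := by
        rw [star_star, mul_smul_comm, smul_mul_assoc, mul_smul]
      rw [h2]
      exact (AddSubmonoid.closure _).nsmul_mem (sSums_conj hs (star a)) n
  refine ⟨?_, ?_⟩
  · intro a ha b hb
    rw [mem_ball_iff] at ha hb ⊢
    have key : 1 - star (a * b) * (a * b)
        = (1 - star b * b) + star b * (1 - star a * a) * b := by
      rw [star_mul]; noncomm_ring
    rw [key]
    exact pos_add hb (pos_conj ha b)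
  · ext a
    constructor
    · rintro ⟨b, hb, rfl⟩; exact star_mem b hb
    · intro ha; exact ⟨star a, star_mem a ha, star_star a⟩
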